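/- arXiv:1401.1894 — 4 statements merged into one kernel-verified Lean document; each statement's English description precedes it below -/
import Mathlib

section
/- For every subset S of Baire space and every ordinal α, the Wadge remainder Rm_α(S) equals [S_α], the set of infinite sequences all of whose finite initial segments lie in the simplified remainder S_α. -/
open Filter Topology Classical

/-- The initial segment `f↾n` of an infinite sequence. -/
def res (f : ℕ → ℕ) (n : ℕ) : List ℕ := List.ofFn (fun i : Fin n => f i)

/-- `[X]`: the set of infinite sequences all of whose finite initial segments lie in `X`. -/
def seqsIn (X : Set (List ℕ)) : Set (ℕ → ℕ) := {f | ∀ n, res f n ∈ X}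

/-- The simplified remainder `S_α`. -/
noncomputable def SRem (S : Set (ℕ → ℕ)) (α : Ordinal.{0}) : Set (List ℕ) :=
  Ordinal.limitRecOn α Set.univ
    (fun _ prev => {x | x ∈ prev ∧ ∃ f g : ℕ → ℕ,
      f ∈ seqsIn prev ∧ g ∈ seqsIn prev ∧ res f x.length = x ∧ res g x.length = x ∧
      f ∈ S ∧ g ∉ S})
    (fun _ _ ih => ⋂ (β : Ordinal.{0}) (h : β < _), ih β h)

/-- Wadge's remainder `Rm_μ(A,B)`. -/
noncomputable def Rm (A B : Set (ℕ → ℕ)) (μ : Ordinal.{0}) : Set (ℕ → ℕ) :=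
  if μ = 0 then Set.univ
  else ⋂ (ν : {ν : Ordinal.{0} // ν < μ}),
    closure (Rm A B ν.1 ∩ A) ∩ closure (Rm A B ν.1 ∩ B)
termination_by μ
decreasing_by exact ν.2

/-- The least ordinal at which the simplified remainders stabilize. -/
noncomputable def alphaS (S : Set (ℕ → ℕ)) : Ordinal.{0} :=
  sInf {α | SRem S α = SRem S (α + 1)}

/-- `S_∞`, the stable value of the simplified remainders. -/
noncomputable def Sinf (S : Set (ℕ → ℕ)) : Set (List ℕ) := SRem S (alphaS S)

/-- `β(σ)`: the least ordinal `γ` with `σ ∉ S_γ`. -/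
noncomputable def betaOf (S : Set (ℕ → ℕ)) (σ : List ℕ) : Ordinal.{0} :=
  sInf {γ | σ ∉ SRem S γ}

/-- `G` guesses `S`. -/
def Guesses (G : List ℕ → Bool) (S : Set (ℕ → ℕ)) : Prop :=
  ∀ f : ℕ → ℕ, ∀ᶠ n in atTop, (G (res f n) = true ↔ f ∈ S)

def Guessable (S : Set (ℕ → ℕ)) : Prop := ∃ G, Guesses G S

/-- `G, H` witness that `S` is guessable with `< α` mind changes. -/
def WitnessMC (S : Set (ℕ → ℕ)) (α : Ordinal.{0}) (G : List ℕ → Bool)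
    (H : List ℕ → Ordinal.{0}) : Prop :=
  Guesses G S ∧ (∀ σ, H σ < α) ∧
  (∀ (f : ℕ → ℕ) (n : ℕ), H (res f (n + 1)) ≤ H (res f n)) ∧
  (∀ (f : ℕ → ℕ) (n : ℕ), G (res f (n + 1)) ≠ G (res f n) →
    H (res f (n + 1)) < H (res f n))

def GuessableMC (S : Set (ℕ → ℕ)) (α : Ordinal.{0}) : Prop := ∃ G H, WitnessMC S α G H

/-- An ordinal is even if it is of the form `λ + n` with `λ` limit or zero and `n` even. -/
def OrdEven (o : Ordinal.{0}) : Prop :=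
  ∃ (l : Ordinal.{0}) (n : ℕ), (l = 0 ∨ Order.IsSuccLimit l) ∧ o = l + n ∧ Even n

/-- The Hausdorff difference set `D_α((A_η)_{η<α})`. -/
def DSet (α : Ordinal.{0}) (A : Ordinal.{0} → Set (ℕ → ℕ)) : Set (ℕ → ℕ) :=
  {x | ∃ η, η < α ∧ x ∈ A η ∧ (∀ η', η' < η → x ∉ A η') ∧ (OrdEven η ↔ ¬ OrdEven α)}

/-- Membership in the class `D_α(Σ⁰₁)`. -/
def InDiff (α : Ordinal.{0}) (S : Set (ℕ → ℕ)) : Prop :=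
  ∃ A : Ordinal.{0} → Set (ℕ → ℕ), (∀ η, η < α → IsOpen (A η)) ∧
    (∀ η η', η ≤ η' → η' < α → A η ⊆ A η') ∧ S = DSet α A
/-- Wadge's `Rm_Ω(S)`: the stable value of `Rm_μ(S, Sᶜ)`. -/
noncomputable def RmInf (S : Set (ℕ → ℕ)) : Set (ℕ → ℕ) :=
  Rm S Sᶜ (sInf {μ : Ordinal.{0} | Rm S Sᶜ μ = Rm S Sᶜ (μ + 1)})

/-- The canonical guesser `G_S`. -/
noncomputable def GS (S : Set (ℕ → ℕ)) (σ : List ℕ) : Bool :=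
  if (∃ f : ℕ → ℕ, res f σ.length = σ ∧ f ∈ seqsIn (SRem S (betaOf S σ - 1))) then
    decide (∃ f : ℕ → ℕ, res f σ.length = σ ∧ f ∈ seqsIn (SRem S (betaOf S σ - 1)) ∧ f ∈ S)
  else if h : σ = [] then false
  else GS S σ.dropLast
termination_by σ.length
decreasing_by
  simp only [List.length_dropLast]
  exact Nat.sub_lt (List.length_pos_iff.mpr h) one_pos

/-- `S` is `F_σ`: a countable union of closed sets. -/
def IsFsigma (S : Set (ℕ → ℕ)) : Prop :=
  ∃ C : ℕ → Set (ℕ → ℕ), (∀ n, IsClosed (C n)) ∧ S = ⋃ n, C n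

/-- Boolean combinations of open sets. -/
inductive BoolComb : Set (ℕ → ℕ) → Prop
  | isOpen {s : Set (ℕ → ℕ)} : IsOpen s → BoolComb s
  | compl {s : Set (ℕ → ℕ)} : BoolComb s → BoolComb sᶜ
  | union {s t : Set (ℕ → ℕ)} : BoolComb s → BoolComb t → BoolComb (s ∪ t)

/-- The Borel class `Σ⁰_α` on Baire space (for `α ≥ 1`). -/
noncomputable def Sigma0 (α : Ordinal.{0}) : Set (Set (ℕ → ℕ)) :=
  if α = 1 then {s | IsOpen s}
  else {s | ∃ g : ℕ → Set (ℕ → ℕ), s = ⋃ n, g n ∧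
    ∀ n, ∃ β : {β : Ordinal.{0} // β < α}, 1 ≤ β.1 ∧ (g n)ᶜ ∈ Sigma0 β.1}
termination_by α
decreasing_by exact β.2

/-- The ambiguous Borel class `Δ⁰_α`. -/
noncomputable def Delta0 (α : Ordinal.{0}) : Set (Set (ℕ → ℕ)) :=
  {s | s ∈ Sigma0 α ∧ sᶜ ∈ Sigma0 α}

/-- The Boolean characteristic function. -/
noncomputable def chi (X : Set (ℕ → ℕ)) (f : ℕ → ℕ) : Bool := decide (f ∈ X)

/-- `G` guesses `S` based on the sequence of sets `Ss`. -/
def GuessesBased (G : List Bool → Bool) (Ss : ℕ → Set (ℕ → ℕ)) (S : Set (ℕ → ℕ)) : Prop :=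
  ∀ f : ℕ → ℕ, ∀ᶠ n in atTop,
    (G (List.ofFn (fun i : Fin n => chi (Ss i) f)) = true ↔ f ∈ S)

/-- `S` is `μ`th-order guessable. -/
def HigherGuessable (μ : Ordinal.{0}) (S : Set (ℕ → ℕ)) : Prop :=
  ∃ Ss : ℕ → Set (ℕ → ℕ), (∀ i, ∃ μi, μi < μ ∧ Ss i ∈ Delta0 (μi + 1)) ∧
    ∃ G : List Bool → Bool, GuessesBased G Ss S


lemma res_length (f : ℕ → ℕ) (n : ℕ) : (res f n).length = n := by simp [res]

lemma res_eq_res {f g : ℕ → ℕ} {n : ℕ} : res f n = res g n ↔ ∀ i < n, f i = g i := by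
  simp [res, List.ofFn_inj, funext_iff, Fin.forall_iff]

lemma mem_closure_iff_res {A : Set (ℕ → ℕ)} {f : ℕ → ℕ} :
    f ∈ closure A ↔ ∀ n, ∃ g ∈ A, res g n = res f n := by
  rw [(PiNat.isTopologicalBasis_cylinders (fun _ : ℕ => ℕ)).mem_closure_iff]
  constructor
  · intro h n
    obtain ⟨g, hg1, hg2⟩ := h (PiNat.cylinder f n) ⟨f, n, rfl⟩ (PiNat.self_mem_cylinder f n)
    exact ⟨g, hg2, res_eq_res.2 hg1⟩
  · rintro h o ⟨x, n, rfl⟩ hf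
    obtain ⟨g, hg, hres⟩ := h n
    exact ⟨g, fun i hi => (res_eq_res.1 hres i hi).trans (hf i hi), hg⟩

lemma SRem_zero (S : Set (ℕ → ℕ)) : SRem S 0 = Set.univ := by
  unfold SRem; rw [Ordinal.limitRecOn_zero]

lemma SRem_succ (S : Set (ℕ → ℕ)) (β : Ordinal.{0}) :
    SRem S (β + 1) = {x | x ∈ SRem S β ∧ ∃ f g : ℕ → ℕ,
      f ∈ seqsIn (SRem S β) ∧ g ∈ seqsIn (SRem S β) ∧ res f x.length = x ∧ res g x.length = x ∧
      f ∈ S ∧ g ∉ S} := by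
  unfold SRem; rw [Ordinal.add_one_eq_succ, Ordinal.limitRecOn_succ]

lemma SRem_limit (S : Set (ℕ → ℕ)) {o : Ordinal.{0}} (h : Order.IsSuccLimit o) :
    SRem S o = ⋂ (β : Ordinal.{0}) (_ : β < o), SRem S β := by
  unfold SRem; rw [Ordinal.limitRecOn_limit _ _ _ _ h]

lemma Rm_eq (A B : Set (ℕ → ℕ)) (μ : Ordinal.{0}) :
    Rm A B μ = if μ = 0 then Set.univ
      else ⋂ (ν : {ν : Ordinal.{0} // ν < μ}),
        closure (Rm A B ν.1 ∩ A) ∩ closure (Rm A B ν.1 ∩ B) := by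
  rw [Rm]

lemma Rm_anti (A B : Set (ℕ → ℕ)) {ν μ : Ordinal.{0}} (h : ν ≤ μ) :
    Rm A B μ ⊆ Rm A B ν := by
  rcases eq_or_ne ν 0 with rfl | hν
  · rw [Rm_eq A B 0, if_pos rfl]; exact Set.subset_univ _
  · have hμ : μ ≠ 0 := fun hh => hν (le_antisymm (hh ▸ h) (by simp))
    rw [Rm_eq A B μ, if_neg hμ, Rm_eq A B ν, if_neg hν]
    intro x hx
    simp only [Set.mem_iInter] at hx ⊢
    exact fun η => hx ⟨η.1, lt_of_lt_of_le η.2 h⟩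

lemma Rm_succ (A B : Set (ℕ → ℕ)) (β : Ordinal.{0}) :
    Rm A B (β + 1) = closure (Rm A B β ∩ A) ∩ closure (Rm A B β ∩ B) := by
  have hβ1 : β < β + 1 := by
    rw [Ordinal.add_one_eq_succ]; exact Order.lt_succ β
  have hne : β + 1 ≠ 0 := fun hh => absurd (hh ▸ hβ1) (by simp)
  rw [Rm_eq A B (β + 1), if_neg hne]
  apply subset_antisymm
  · exact Set.iInter_subset
      (fun ν : {ν : Ordinal.{0} // ν < β + 1} =>
        closure (Rm A B ν.1 ∩ A) ∩ closure (Rm A B ν.1 ∩ B)) ⟨β, hβ1⟩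
  · intro x hx
    apply Set.mem_iInter.2
    rintro ⟨ν, hν⟩
    have hνβ : ν ≤ β := by
      rw [Ordinal.add_one_eq_succ, Order.lt_succ_iff] at hν; exact hν
    exact ⟨closure_mono (Set.inter_subset_inter_left _ (Rm_anti A B hνβ)) hx.1,
           closure_mono (Set.inter_subset_inter_left _ (Rm_anti A B hνβ)) hx.2⟩

lemma Rm_limit (A B : Set (ℕ → ℕ)) {o : Ordinal.{0}} (h : Order.IsSuccLimit o) :
    Rm A B o = ⋂ (ν : {ν : Ordinal.{0} // ν < o}), Rm A B ν.1 := by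
  apply subset_antisymm
  · intro x hx
    simp only [Set.mem_iInter]
    exact fun ν => Rm_anti A B ν.2.le hx
  · intro x hx
    simp only [Set.mem_iInter] at hx
    rw [Rm_eq A B o, if_neg h.pos.ne']
    apply Set.mem_iInter.2
    rintro ⟨ν, hν⟩
    have h1 : ν + 1 < o := by
      rw [Ordinal.add_one_eq_succ]; exact h.succ_lt hν
    have := hx ⟨ν + 1, h1⟩
    rwa [Rm_succ A B ν] at this

theorem stmt0 (S : Set (ℕ → ℕ)) (α : Ordinal.{0}) :
    Rm S Sᶜ α = seqsIn (SRem S α) := by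
  induction α using Ordinal.limitRecOn with
  | zero =>
    rw [Rm_eq, if_pos rfl, SRem_zero]
    ext f
    simp [seqsIn]
  | add_one β ih =>
    rw [Rm_succ, ih, SRem_succ]
    ext f
    constructor
    · rintro ⟨h1, h2⟩ n
      obtain ⟨g1, ⟨hg1T, hg1S⟩, hr1⟩ := mem_closure_iff_res.1 h1 n
      obtain ⟨g2, ⟨hg2T, hg2S⟩, hr2⟩ := mem_closure_iff_res.1 h2 n
      refine ⟨hr1 ▸ hg1T n, g1, g2, hg1T, hg2T, ?_, ?_, hg1S, hg2S⟩
      · rw [res_length]; exact hr1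
      · rw [res_length]; exact hr2
    · intro h
      constructor
      · apply mem_closure_iff_res.2
        intro n
        obtain ⟨-, g1, g2, hg1T, hg2T, hr1, hr2, hg1S, hg2S⟩ := h n
        exact ⟨g1, ⟨hg1T, hg1S⟩, by rwa [res_length] at hr1⟩
      · apply mem_closure_iff_res.2
        intro n
        obtain ⟨-, g1, g2, hg1T, hg2T, hr1, hr2, hg1S, hg2S⟩ := h n
        exact ⟨g2, ⟨hg2T, hg2S⟩, by rwa [res_length] at hr2⟩
  | limit o ho ih =>
    rw [Rm_limit S Sᶜ ho, SRem_limit S ho]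
    ext f
    constructor
    · intro h n
      simp only [Set.mem_iInter] at h ⊢
      intro β hβ
      have h2 := h ⟨β, hβ⟩
      rw [ih β hβ] at h2
      exact h2 n
    · intro h
      apply Set.mem_iInter.2
      rintro ⟨ν, hν⟩
      rw [ih ν hν]
      intro n
      have h2 := h n
      simp only [Set.mem_iInter] at h2
      exact h2 ν hν
end

section
/- S ⊆ ℕ^ℕ is a Boolean combination of open sets if and only if S is guessable with fewer than ω mind changes. -/
open Filter Topology Classical

namespace Stmt9Aux

lemma res_length (f : ℕ → ℕ) (n : ℕ) : (res f n).length = n := List.length_ofFn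

lemma res_zero (f : ℕ → ℕ) : res f 0 = [] := rfl

lemma res_eq_iff {f g : ℕ → ℕ} {n : ℕ} : res f n = res g n ↔ ∀ i < n, f i = g i := by
  rw [res, res, List.ofFn_inj]
  constructor
  · intro h i hi; exact congrFun h ⟨i, hi⟩
  · intro h; funext i; exact h i i.2

/-- Mind-change counter for guesser `G` along `f` up to time `n`. -/
def mcf (G : List ℕ → Bool) (f : ℕ → ℕ) : ℕ → ℕ
  | 0 => 0
  | n+1 => mcf G f n + (if G (res f (n+1)) = G (res f n) then 0 else 1)

lemma mcf_mono (G : List ℕ → Bool) (f : ℕ → ℕ) : Monotone (mcf G f) :=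
  monotone_nat_of_le_succ fun n => Nat.le_add_right _ _

lemma mcf_eq_of_agree (G : List ℕ → Bool) {f g : ℕ → ℕ} {n : ℕ}
    (h : ∀ i < n, f i = g i) : mcf G f n = mcf G g n := by
  induction n with
  | zero => rfl
  | succ n ih =>
    have hlt : ∀ i < n, f i = g i := fun i hi => h i (hi.trans n.lt_succ_self)
    have h1 : res f (n+1) = res g (n+1) := res_eq_iff.mpr h
    have h2 : res f n = res g n := res_eq_iff.mpr hlt
    simp [mcf, h1, h2, ih hlt]

lemma mcf_add_le (G : List ℕ → Bool) (hN : List ℕ → ℕ) (f : ℕ → ℕ)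
    (hm : ∀ n, hN (res f (n+1)) ≤ hN (res f n))
    (hs : ∀ n, G (res f (n+1)) ≠ G (res f n) → hN (res f (n+1)) < hN (res f n)) :
    ∀ n, mcf G f n + hN (res f n) ≤ hN (res f 0) := by
  intro n
  induction n with
  | zero => simp [mcf]
  | succ n ih =>
    by_cases hc : G (res f (n+1)) = G (res f n)
    · have := hm n
      simp only [mcf, if_pos hc]
      omega
    · have := hs n hc
      simp only [mcf, if_neg hc]
      omega

lemma G_eq_final (G : List ℕ → Bool) (f : ℕ → ℕ) (n : ℕ) :
    G (res f n) = (if Even (mcf G f n) then G [] else !(G [])) := by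
  induction n with
  | zero => simp [mcf, res_zero]
  | succ n ih =>
    by_cases hc : G (res f (n+1)) = G (res f n)
    · simp only [mcf, if_pos hc]
      rw [hc, ih, Nat.add_zero]
    · have hnot : G (res f (n+1)) = !(G (res f n)) := by
        cases h1 : G (res f (n+1)) <;> cases h2 : G (res f n) <;> simp_all
      simp only [mcf, if_neg hc]
      rw [hnot, ih]
      by_cases he : Even (mcf G f n) <;> simp [he, Nat.even_add_one]

lemma exists_nat_witness {S : Set (ℕ → ℕ)} (h : BoolComb S) :
    ∃ (G : List ℕ → Bool) (H : List ℕ → ℕ), Guesses G S ∧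
      (∀ (f : ℕ → ℕ) (n : ℕ), H (res f (n+1)) ≤ H (res f n)) ∧
      (∀ (f : ℕ → ℕ) (n : ℕ), G (res f (n+1)) ≠ G (res f n) →
        H (res f (n+1)) < H (res f n)) := by
  classical
  induction h with
  | @isOpen s hs =>
    set P : List ℕ → Prop := fun σ => ∀ g : ℕ → ℕ, res g σ.length = σ → g ∈ s with hP
    refine ⟨fun σ => decide (P σ), fun σ => if P σ then 0 else 1, ?_, ?_, ?_⟩
    · -- Guesses
      intro f
      by_cases hf : f ∈ s
      · obtain ⟨I, u, hIu, hsub⟩ := isOpen_pi_iff.mp hs f hf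
        filter_upwards [eventually_ge_atTop (I.sup id + 1)] with n hn
        have hPn : P (res f n) := by
          intro g hg
          rw [res_length] at hg
          apply hsub
          intro i hiI
          have hi : i < n := by
            have hle : i ≤ I.sup id := Finset.le_sup (f := id) hiI
            omega
          have : g i = f i := res_eq_iff.mp hg i hi
          rw [this]
          exact (hIu i hiI).2
        simp only [decide_eq_true_eq]
        exact iff_of_true hPn hf
      · apply Eventually.of_forall
        intro n
        have hPn : ¬ P (res f n) := by
          intro hp
          exact hf (hp f (by rw [res_length]))
        simp only [decide_eq_true_eq]
        exact iff_of_false hPn hf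
    · -- H nonincreasing
      intro f n
      have mono : P (res f n) → P (res f (n+1)) := by
        intro hp g hg
        rw [res_length] at hg
        apply hp g
        rw [res_length]
        exact res_eq_iff.mpr fun i hi => res_eq_iff.mp hg i (hi.trans n.lt_succ_self)
      beta_reduce
      by_cases hp : P (res f n)
      · rw [if_pos hp, if_pos (mono hp)]
      · rw [if_neg hp]
        split <;> omega
    · -- H strict at changes
      intro f n hne
      have mono : P (res f n) → P (res f (n+1)) := by
        intro hp g hg
        rw [res_length] at hg
        apply hp g
        rw [res_length]
        exact res_eq_iff.mpr fun i hi => res_eq_iff.mp hg i (hi.trans n.lt_succ_self)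
      by_cases hp : P (res f n)
      · exact absurd (decide_eq_decide.mpr (iff_of_true (mono hp) hp)) hne
      · by_cases hp1 : P (res f (n+1))
        · beta_reduce
          rw [if_pos hp1, if_neg hp]
          exact zero_lt_one
        · exact absurd (decide_eq_decide.mpr (iff_of_false hp1 hp)) hne
  | @compl s _ ih =>
    obtain ⟨G, H, hG, hm, hst⟩ := ih
    refine ⟨fun σ => !(G σ), H, ?_, hm, ?_⟩
    · intro f
      filter_upwards [hG f] with n hn
      cases h' : G (res f n) <;> simp_all
    · intro f n hne
      apply hst
      simp only [ne_eq, Bool.not_inj_iff] at hne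
      exact hne
  | @union s t _ _ ih1 ih2 =>
    obtain ⟨G1, H1, hG1, hm1, hst1⟩ := ih1
    obtain ⟨G2, H2, hG2, hm2, hst2⟩ := ih2
    refine ⟨fun σ => G1 σ || G2 σ, fun σ => H1 σ + H2 σ, ?_, ?_, ?_⟩
    · intro f
      filter_upwards [hG1 f, hG2 f] with n h1 h2
      rw [Set.mem_union, ← h1, ← h2, Bool.or_eq_true]
    · intro f n
      exact Nat.add_le_add (hm1 f n) (hm2 f n)
    · intro f n hne
      have : G1 (res f (n+1)) ≠ G1 (res f n) ∨ G2 (res f (n+1)) ≠ G2 (res f n) := by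
        by_contra hc
        push_neg at hc
        have heq : (G1 (res f (n+1)) || G2 (res f (n+1))) = (G1 (res f n) || G2 (res f n)) := by
          rw [hc.1, hc.2]
        exact hne heq
      rcases this with h | h
      · exact Nat.add_lt_add_of_lt_of_le (hst1 f n h) (hm2 f n)
      · exact Nat.add_lt_add_of_le_of_lt (hm1 f n) (hst2 f n h)
lemma boolComb_empty : BoolComb (∅ : Set (ℕ → ℕ)) := .isOpen isOpen_empty

lemma boolComb_diff {U V : Set (ℕ → ℕ)} (hU : IsOpen U) (hV : IsOpen V) :
    BoolComb (U \ V) := by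
  have h : U \ V = (Uᶜ ∪ V)ᶜ := by
    rw [Set.compl_union, compl_compl, Set.diff_eq]
  rw [h]
  exact .compl (.union (.compl (.isOpen hU)) (.isOpen hV))

lemma boolComb_biUnion (m : ℕ) (g : ℕ → Set (ℕ → ℕ)) (hg : ∀ i, BoolComb (g i)) :
    BoolComb (⋃ i < m, g i) := by
  induction m with
  | zero => simpa using boolComb_empty
  | succ m ih => rw [Set.biUnion_lt_succ]; exact .union ih (hg m)

lemma boolComb_of_witness {S : Set (ℕ → ℕ)} {G : List ℕ → Bool} {H : List ℕ → Ordinal.{0}}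
    (h : WitnessMC S Ordinal.omega0 G H) : BoolComb S := by
  classical
  obtain ⟨hG, hlt, hmono, hstrict⟩ := h
  choose hN hNeq using fun σ => Ordinal.lt_omega0.mp (hlt σ)
  have hm' : ∀ (f : ℕ → ℕ) (n : ℕ), hN (res f (n+1)) ≤ hN (res f n) := by
    intro f n
    have := hmono f n
    rw [hNeq, hNeq] at this
    exact_mod_cast this
  have hs' : ∀ (f : ℕ → ℕ) (n : ℕ), G (res f (n+1)) ≠ G (res f n) →
      hN (res f (n+1)) < hN (res f n) := by
    intro f n hne
    have := hstrict f n hne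
    rw [hNeq, hNeq] at this
    exact_mod_cast this
  set N : ℕ := hN [] with hNdef
  have hbdd : ∀ (f : ℕ → ℕ) (n : ℕ), mcf G f n ≤ N := by
    intro f n
    have := mcf_add_le G hN f (hm' f) (hs' f) n
    rw [res_zero] at this
    omega
  set cF : (ℕ → ℕ) → ℕ := fun f => sSup (Set.range (mcf G f)) with hcF
  have hrange_bdd : ∀ f : ℕ → ℕ, BddAbove (Set.range (mcf G f)) :=
    fun f => ⟨N, fun x ⟨n, hn⟩ => hn ▸ hbdd f n⟩
  have h_le_cF : ∀ (f : ℕ → ℕ) (n : ℕ), mcf G f n ≤ cF f :=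
    fun f n => le_csSup (hrange_bdd f) ⟨n, rfl⟩
  have h_attained : ∀ f : ℕ → ℕ, ∃ M, mcf G f M = cF f := by
    intro f
    exact Nat.sSup_mem (s := Set.range (mcf G f)) ⟨mcf G f 0, 0, rfl⟩ (hrange_bdd f)
  have hcF_le : ∀ f : ℕ → ℕ, cF f ≤ N :=
    fun f => csSup_le ⟨mcf G f 0, 0, rfl⟩ (fun x ⟨n, hn⟩ => hn ▸ hbdd f n)
  set final : ℕ → Bool := fun j => if Even j then G [] else !(G []) with hfinal
  have hev : ∀ f : ℕ → ℕ, ∀ᶠ n in atTop, G (res f n) = final (cF f) := by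
    intro f
    obtain ⟨M, hM⟩ := h_attained f
    filter_upwards [eventually_ge_atTop M] with n hn
    have hconst : mcf G f n = cF f :=
      le_antisymm (h_le_cF f n) (hM ▸ mcf_mono G f hn)
    rw [G_eq_final G f n, hconst]
  have hmem : ∀ f : ℕ → ℕ, f ∈ S ↔ final (cF f) = true := by
    intro f
    obtain ⟨n, h1, h2⟩ := ((hG f).and (hev f)).exists
    rw [← h1, h2]
  set A : ℕ → Set (ℕ → ℕ) := fun j => {x | ∃ n, j ≤ mcf G x n} with hA
  have hAopen : ∀ j, IsOpen (A j) := by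
    intro j
    rw [isOpen_iff_mem_nhds]
    rintro x ⟨n, hn⟩
    have hCopen : IsOpen (⋂ i ∈ Finset.range n, (fun g : ℕ → ℕ => g i) ⁻¹' {x i}) :=
      isOpen_biInter_finset fun i _ =>
        (continuous_apply i).isOpen_preimage _ (isOpen_discrete _)
    have hxC : x ∈ ⋂ i ∈ Finset.range n, (fun g : ℕ → ℕ => g i) ⁻¹' {x i} := by simp
    apply Filter.mem_of_superset (hCopen.mem_nhds hxC)
    rintro g hg
    have hagree : ∀ i < n, g i = x i := by
      intro i hi
      have := Set.mem_iInter₂.mp hg i (Finset.mem_range.mpr hi)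
      simpa using this
    exact ⟨n, by rw [mcf_eq_of_agree G hagree]; exact hn⟩
  have hSeq : S = ⋃ j < N + 1, (if final j = true then A j \ A (j+1) else ∅) := by
    ext x
    simp only [Set.mem_iUnion]
    constructor
    · intro hx
      refine ⟨cF x, Nat.lt_succ_of_le (hcF_le x), ?_⟩
      rw [if_pos ((hmem x).mp hx)]
      obtain ⟨M, hM⟩ := h_attained x
      refine ⟨⟨M, hM.ge⟩, ?_⟩
      rintro ⟨n, hn⟩
      have := h_le_cF x n
      omega
    · rintro ⟨j, hj, hD⟩
      split_ifs at hD with hf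
      · obtain ⟨⟨n, hn⟩, hnot⟩ := hD
        have h1 : j ≤ cF x := hn.trans (h_le_cF x n)
        have h2 : ¬ (j + 1 ≤ cF x) := by
          intro hc
          obtain ⟨M, hM⟩ := h_attained x
          exact hnot ⟨M, by rw [hM]; exact hc⟩
        have hj' : cF x = j := by omega
        apply (hmem x).mpr
        rw [hj']
        exact hf
      · exact absurd hD (Set.notMem_empty x)
  rw [hSeq]
  apply boolComb_biUnion
  intro j
  split_ifs
  · exact boolComb_diff (hAopen j) (hAopen (j+1))
  · exact boolComb_empty

end Stmt9Aux

theorem stmt9 (S : Set (ℕ → ℕ)) :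
    BoolComb S ↔ GuessableMC S Ordinal.omega0 := by
  constructor
  · intro h
    obtain ⟨G, H, hG, hm, hst⟩ := Stmt9Aux.exists_nat_witness h
    exact ⟨G, fun σ => (H σ : Ordinal), hG, fun σ => Ordinal.nat_lt_omega0 _,
      fun f n => by beta_reduce; exact_mod_cast hm f n,
      fun f n hne => by beta_reduce; exact_mod_cast hst f n hne⟩
  · rintro ⟨G, H, hW⟩
    exact Stmt9Aux.boolComb_of_witness hW
end

section
/- Suppose G and H witness that S is guessable with fewer than α mind changes. Then there is H' : ℕ^{<ℕ} → α such that G, H' also witness guessability with < α mind changes, H'(∅) = H(∅), and for all f ∈ ℕ^ℕ and n ∈ ℕ: H'(f↾(n+1)) has the same parity as H'(f↾n) if and only if G(f↾(n+1)) = G(f↾n). -/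
open Filter Topology Classical

lemma exists_decomp (γ : Ordinal.{0}) :
    ∃ (l : Ordinal.{0}) (n : ℕ), (l = 0 ∨ Order.IsSuccLimit l) ∧ γ = l + n := by
  induction γ using Ordinal.limitRecOn with
  | zero => exact ⟨0, 0, Or.inl rfl, by simp⟩
  | add_one δ ih =>
      obtain ⟨l, n, h1, h2⟩ := ih
      refine ⟨l, n+1, h1, ?_⟩
      rw [h2]
      push_cast
      rw [add_assoc]
  | limit δ hδ _ => exact ⟨δ, 0, Or.inr hδ, by simp⟩

lemma nat_add_lt_limit {l : Ordinal.{0}} (hl : Order.IsSuccLimit l) {b : Ordinal} (hb : b < l) (n : ℕ) :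
    b + n < l := by
  induction n with
  | zero => simpa
  | succ n ih =>
      push_cast
      rw [← add_assoc]
      rw [Ordinal.add_one_eq_succ]
      exact hl.succ_lt ih

lemma decomp_unique {l l' : Ordinal.{0}} {n m : ℕ} (hl : l = 0 ∨ Order.IsSuccLimit l)
    (hl' : l' = 0 ∨ Order.IsSuccLimit l') (h : l + (n : Ordinal) = l' + m) : l = l' ∧ n = m := by
  have key : ∀ {a b : Ordinal.{0}} {p q : ℕ}, (b = 0 ∨ Order.IsSuccLimit b) → a + (p : Ordinal) = b + q →
      a ≤ b → a = b := by
    intro a b p q hb h hab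
    rcases lt_or_eq_of_le hab with hlt | he
    · rcases hb with rfl | hb
      · exact absurd hlt (by simp)
      · have h2 : a + (p : Ordinal) < b := nat_add_lt_limit hb hlt p
        rw [h] at h2
        exact absurd ((le_self_add : b ≤ b + (q : Ordinal)).trans_lt h2) (lt_irrefl _)
    · exact he
  have hll : l = l' := by
    rcases le_total l l' with hle | hle
    · exact key hl' h hle
    · exact (key hl h.symm hle).symm
  subst hll
  refine ⟨rfl, ?_⟩
  exact_mod_cast (add_right_inj l).mp h

lemma ordEven_add_one (γ : Ordinal.{0}) : OrdEven (γ + 1) ↔ ¬ OrdEven γ := by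
  constructor
  · rintro ⟨l, n, hl, he, hn⟩ ⟨l', m, hl', he', hm⟩
    have h : l + (n : Ordinal) = l' + ((m + 1 : ℕ) : Ordinal) := by
      rw [← he, he']; push_cast; rw [add_assoc]
    obtain ⟨-, hnm⟩ := decomp_unique hl hl' h
    subst hnm
    exact (Nat.even_add_one.mp hn) hm
  · intro h
    obtain ⟨l, n, hl, he⟩ := exists_decomp γ
    rcases Nat.even_or_odd n with hn | hn
    · exact absurd ⟨l, n, hl, he, hn⟩ h
    · exact ⟨l, n+1, hl, by rw [he]; push_cast; rw [add_assoc], hn.add_one⟩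

lemma res_getD (σ : List ℕ) : res (fun i => σ.getD i 0) σ.length = σ := by
  apply List.ext_getElem
  · simp [res]
  · intro i h1 h2
    simp [res, List.getD_eq_getElem]

theorem stmt11 (S : Set (ℕ → ℕ)) (α : Ordinal.{0}) (G : List ℕ → Bool)
    (H : List ℕ → Ordinal.{0}) (hW : WitnessMC S α G H) :
    ∃ H' : List ℕ → Ordinal.{0}, WitnessMC S α G H' ∧ H' [] = H [] ∧
      ∀ (f : ℕ → ℕ) (n : ℕ),
        ((OrdEven (H' (res f (n + 1))) ↔ OrdEven (H' (res f n))) ↔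
          G (res f (n + 1)) = G (res f n)) := by
  obtain ⟨hG, hB, hM, hS⟩ := hW
  set P : List ℕ → Prop := fun σ => (OrdEven (H []) ↔ (G σ = G [])) with hP
  set H' : List ℕ → Ordinal.{0} :=
    fun σ => if OrdEven (H σ) ↔ P σ then H σ else H σ + 1 with hH'
  have hpar : ∀ σ, OrdEven (H' σ) ↔ P σ := by
    intro σ
    by_cases h : OrdEven (H σ) ↔ P σ
    · simpa [hH', h] using h
    · simp only [hH', if_neg h]
      rw [ordEven_add_one]
      tauto
  have hnil : H' [] = H [] := by
    have : OrdEven (H ([] : List ℕ)) ↔ P [] := by simp [hP]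
    simp [hH', this]
  have hle : ∀ σ, H σ ≤ H' σ := by
    intro σ
    by_cases h : OrdEven (H σ) ↔ P σ <;> simp only [hH', if_pos, if_neg, h, if_true, if_false]
    · exact le_rfl
    · rw [Ordinal.add_one_eq_succ]; exact Order.le_succ _
  have hle' : ∀ σ, H' σ ≤ H σ + 1 := by
    intro σ
    by_cases h : OrdEven (H σ) ↔ P σ <;> simp only [hH', if_pos, if_neg, h, if_true, if_false]
    · rw [Ordinal.add_one_eq_succ]; exact Order.le_succ _
    · exact le_rfl
  -- monotonicity
  have hmono : ∀ (f : ℕ → ℕ) (n : ℕ), H' (res f (n + 1)) ≤ H' (res f n) := by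
    intro f n
    by_cases hg : G (res f (n + 1)) = G (res f n)
    · have hPeq : P (res f (n + 1)) = P (res f n) := by simp [hP, hg]
      rcases lt_or_eq_of_le (hM f n) with hlt | heq
      · calc H' (res f (n+1)) ≤ H (res f (n+1)) + 1 := hle' _
          _ ≤ H (res f n) := by
              rw [Ordinal.add_one_eq_succ]; exact Order.succ_le_of_lt hlt
          _ ≤ H' (res f n) := hle _
      · simp [hH', heq, hPeq]
    · have hlt := hS f n hg
      calc H' (res f (n+1)) ≤ H (res f (n+1)) + 1 := hle' _
        _ ≤ H (res f n) := by
            rw [Ordinal.add_one_eq_succ]; exact Order.succ_le_of_lt hlt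
        _ ≤ H' (res f n) := hle _
  have hstrict : ∀ (f : ℕ → ℕ) (n : ℕ), G (res f (n + 1)) ≠ G (res f n) →
      H' (res f (n + 1)) < H' (res f n) := by
    intro f n hg
    refine lt_of_le_of_ne (hmono f n) ?_
    intro he
    have h1 := hpar (res f (n+1))
    have h2 := hpar (res f n)
    rw [he, h2] at h1
    simp only [hP] at h1
    rcases Bool.eq_false_or_eq_true (G (res f (n+1))) with h | h <;>
      rcases Bool.eq_false_or_eq_true (G (res f n)) with h' | h' <;>
      simp [h, h'] at h1 hg <;> tauto
  have hbound : ∀ σ, H' σ < α := by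
    intro σ
    set f : ℕ → ℕ := fun i => σ.getD i 0 with hf
    have hres : res f σ.length = σ := res_getD σ
    have key : ∀ m, H' (res f m) ≤ H' (res f 0) := by
      intro m
      induction m with
      | zero => exact le_rfl
      | succ m ih => exact (hmono f m).trans ih
    have h0 : res f 0 = [] := by simp [res]
    calc H' σ = H' (res f σ.length) := by rw [hres]
      _ ≤ H' (res f 0) := key _
      _ = H [] := by rw [h0, hnil]
      _ < α := hB []
  refine ⟨H', ⟨hG, hbound, hmono, hstrict⟩, hnil, ?_⟩
  intro f n
  rw [hpar, hpar]
  simp only [hP]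
  rcases Bool.eq_false_or_eq_true (G (res f (n+1))) with h | h <;>
    rcases Bool.eq_false_or_eq_true (G (res f n)) with h' | h' <;>
    rcases Bool.eq_false_or_eq_true (G []) with h'' | h'' <;>
    simp [h, h', h''] <;> tauto
end

section
/- Suppose G : ℕ^{<ℕ} → {0,1} and H : ℕ^{<ℕ} → α+1 witness that S is guessable with fewer than α+1 mind changes, and G(∅) = 0. Then S ∈ D_α(Σ⁰₁), i.e., S = D_α((A_η)_{η<α}) for some increasing sequence of open sets A_η. -/
open Filter Topology Classical

lemma ordDecomp_exists (o : Ordinal.{0}) :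
    ∃ (l : Ordinal.{0}) (n : ℕ), (l = 0 ∨ Order.IsSuccLimit l) ∧ o = l + n := by
  obtain ⟨n, hn⟩ := Ordinal.lt_omega0.1 (Ordinal.mod_lt o Ordinal.omega0_ne_zero)
  refine ⟨Ordinal.omega0 * (o / Ordinal.omega0), n, ?_, by rw [← hn, Ordinal.div_add_mod]⟩
  rcases eq_or_ne (o / Ordinal.omega0) 0 with h | h
  · left; simp [h]
  · right
    exact Ordinal.isSuccLimit_mul_left Ordinal.isSuccLimit_omega0 (pos_iff_ne_zero.2 h)

lemma add_nat_lt_limit {l a : Ordinal.{0}} (hl : Order.IsSuccLimit l) (h : a < l) (n : ℕ) :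
    a + (n : Ordinal.{0}) < l := by
  induction n with
  | zero => simpa
  | succ n ih =>
    rw [Nat.cast_succ, ← add_assoc, Ordinal.add_one_eq_succ]
    exact hl.succ_lt ih

lemma ordDecomp_aux {l l' : Ordinal.{0}} {n n' : ℕ}
    (hl' : l' = 0 ∨ Order.IsSuccLimit l') (h : l + (n : Ordinal.{0}) = l' + n') (hlt : l < l') :
    False := by
  rcases hl' with h0 | hlim
  · exact absurd hlt (by simp [h0])
  · have h1 : l + (n : Ordinal.{0}) < l' := add_nat_lt_limit hlim hlt n
    have h2 : l' ≤ l' + (n' : Ordinal.{0}) := le_self_add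
    rw [h] at h1
    exact absurd h1 (not_lt.2 h2)

lemma ordDecomp_unique {l l' : Ordinal.{0}} {n n' : ℕ}
    (hl : l = 0 ∨ Order.IsSuccLimit l) (hl' : l' = 0 ∨ Order.IsSuccLimit l')
    (h : l + (n : Ordinal.{0}) = l' + n') : l = l' ∧ n = n' := by
  have hll : l = l' := by
    rcases lt_trichotomy l l' with hlt | he | hlt
    · exact (ordDecomp_aux hl' h hlt).elim
    · exact he
    · exact (ordDecomp_aux hl h.symm hlt).elim
  subst hll
  have hn : (n : Ordinal.{0}) = n' := add_left_cancel_iff.1 h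
  exact ⟨rfl, Nat.cast_injective hn⟩

lemma ordEven_iff {o l : Ordinal.{0}} {n : ℕ} (hl : l = 0 ∨ Order.IsSuccLimit l) (ho : o = l + n) :
    OrdEven o ↔ Even n := by
  constructor
  · rintro ⟨l', n', hl', ho', he'⟩
    obtain ⟨-, hnn⟩ := ordDecomp_unique hl hl' (ho ▸ ho')
    exact hnn ▸ he'
  · intro he
    exact ⟨l, n, hl, ho, he⟩

lemma ordEven_succ (o : Ordinal.{0}) : OrdEven (o + 1) ↔ ¬ OrdEven o := by
  obtain ⟨l, n, hl, ho⟩ := ordDecomp_exists o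
  have h1 : o + 1 = l + ((n + 1 : ℕ) : Ordinal.{0}) := by
    rw [ho]; push_cast; rw [add_assoc]
  rw [ordEven_iff hl ho, ordEven_iff hl h1, Nat.even_add_one]
lemma res_zero (f : ℕ → ℕ) : res f 0 = [] := rfl

lemma res_congr {f g : ℕ → ℕ} {n : ℕ} (h : ∀ i < n, g i = f i) : res g n = res f n := by
  unfold res
  exact congrArg List.ofFn (funext fun i => h i i.2)

/-- The modified rank used in the difference hierarchy construction. -/
noncomputable def rV (α : Ordinal.{0}) (G : List ℕ → Bool) (H : List ℕ → Ordinal.{0})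
    (σ : List ℕ) : Ordinal.{0} :=
  if OrdEven (H σ) ↔ (G σ = true ↔ ¬ OrdEven α) then H σ else H σ + 1

lemma le_rV (α : Ordinal.{0}) (G : List ℕ → Bool) (H : List ℕ → Ordinal.{0}) (σ : List ℕ) :
    H σ ≤ rV α G H σ := by
  unfold rV; split
  · exact le_refl _
  · exact le_self_add

lemma rV_le (α : Ordinal.{0}) (G : List ℕ → Bool) (H : List ℕ → Ordinal.{0}) (σ : List ℕ) :
    rV α G H σ ≤ H σ + 1 := by
  unfold rV; split
  · exact le_self_add
  · exact le_refl _

lemma rV_congr {α : Ordinal.{0}} {G : List ℕ → Bool} {H : List ℕ → Ordinal.{0}}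
    {σ τ : List ℕ} (h1 : H σ = H τ) (h2 : G σ = G τ) : rV α G H σ = rV α G H τ := by
  unfold rV; rw [h1, h2]
theorem stmt12 (S : Set (ℕ → ℕ)) (α : Ordinal.{0}) (G : List ℕ → Bool)
    (H : List ℕ → Ordinal.{0}) (hW : WitnessMC S (α + 1) G H) (hG : G [] = false) :
    InDiff α S := by
  obtain ⟨hGu, hlt, hmono, hchg⟩ := hW
  set r : List ℕ → Ordinal.{0} := rV α G H with hrdef
  -- the rank is non-increasing along any sequence
  have hstep : ∀ (f : ℕ → ℕ) (n : ℕ), r (res f (n + 1)) ≤ r (res f n) := by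
    intro f n
    by_cases hH : H (res f (n + 1)) = H (res f n)
    · by_cases hGc : G (res f (n + 1)) = G (res f n)
      · exact le_of_eq (rV_congr hH hGc)
      · exact absurd (hH ▸ hchg f n hGc) (lt_irrefl _)
    · have hlt2 : H (res f (n + 1)) < H (res f n) := lt_of_le_of_ne (hmono f n) hH
      calc r (res f (n + 1)) ≤ H (res f (n + 1)) + 1 := rV_le α G H _
        _ ≤ H (res f n) := by
            rw [Ordinal.add_one_eq_succ]; exact Order.succ_le_of_lt hlt2
        _ ≤ r (res f n) := le_rV α G H _
  have hranti : ∀ f : ℕ → ℕ, Antitone fun n => r (res f n) :=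
    fun f => antitone_nat_of_succ_le (hstep f)
  have hHanti : ∀ f : ℕ → ℕ, Antitone fun n => H (res f n) :=
    fun f => antitone_nat_of_succ_le (hmono f)
  -- stabilization
  have hstab : ∀ f : ℕ → ℕ, ∃ N,
      (∀ n, N ≤ n → H (res f n) = H (res f N) ∧ G (res f n) = G (res f N)) ∧
      (G (res f N) = true ↔ f ∈ S) := by
    intro f
    obtain ⟨o, ⟨N₀, hN₀⟩, hmin⟩ :=
      Ordinal.lt_wf.has_min (Set.range fun n => H (res f n)) ⟨_, ⟨0, rfl⟩⟩
    have hHc : ∀ n, N₀ ≤ n → H (res f n) = H (res f N₀) := by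
      intro n hn
      have hN₀' : H (res f N₀) = o := hN₀
      have h1 : H (res f n) ≤ H (res f N₀) := hHanti f hn
      have h2 : ¬ H (res f n) < o := hmin _ ⟨n, rfl⟩
      rw [← hN₀'] at h2
      exact le_antisymm h1 (not_lt.1 h2)
    have hGc : ∀ n, N₀ ≤ n → G (res f n) = G (res f N₀) := by
      intro n hn
      induction n, hn using Nat.le_induction with
      | base => rfl
      | succ n hn ih =>
        by_contra hne
        by_cases hGc2 : G (res f (n + 1)) = G (res f n)
        · exact hne (hGc2.trans ih)
        · have := hchg f n hGc2
          rw [hHc (n + 1) (le_trans hn (Nat.le_succ n)), hHc n hn] at this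
          exact lt_irrefl _ this
    obtain ⟨N₁, hN₁⟩ := Filter.eventually_atTop.1 (hGu f)
    refine ⟨max N₀ N₁, fun n hn => ?_, ?_⟩
    · constructor
      · rw [hHc n (le_trans (le_max_left _ _) hn), hHc _ (le_max_left _ _)]
      · rw [hGc n (le_trans (le_max_left _ _) hn), hGc _ (le_max_left _ _)]
    · exact hN₁ _ (le_max_right _ _)
  -- the open sets
  set A : Ordinal.{0} → Set (ℕ → ℕ) := fun η => {f | ∃ n, r (res f n) ≤ η} with hAdef
  have hopen : ∀ η, IsOpen (A η) := by
    intro η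
    rw [isOpen_iff_mem_nhds]
    rintro f ⟨n, hn⟩
    have hnb : {g : ℕ → ℕ | ∀ i < n, g i = f i} ∈ 𝓝 f := by
      have he : {g : ℕ → ℕ | ∀ i < n, g i = f i}
          = ⋂ i ∈ Finset.range n, {g : ℕ → ℕ | g i = f i} := by
        ext g; simp
      rw [he]
      refine (Filter.biInter_finset_mem _).2 fun i _ => ?_
      have : {g : ℕ → ℕ | g i = f i} = (fun g : ℕ → ℕ => g i) ⁻¹' {f i} := rfl
      rw [this]
      exact IsOpen.mem_nhds (IsOpen.preimage (continuous_apply i) (isOpen_discrete {f i})) rfl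
    refine Filter.mem_of_superset hnb fun g hg => ?_
    exact ⟨n, (res_congr hg) ▸ hn⟩
  have hmonoA : ∀ η η', η ≤ η' → η' < α → A η ⊆ A η' := by
    rintro η η' hle - g ⟨n, hn⟩
    exact ⟨n, le_trans hn hle⟩
  refine ⟨A, fun η _ => hopen η, hmonoA, ?_⟩
  ext f
  obtain ⟨N, hNs, hNg⟩ := hstab f
  -- r (res f N) is the minimum value of r along f
  have hrmin : ∀ n, r (res f N) ≤ r (res f n) := by
    intro n
    rcases le_total n N with h | h
    · exact hranti f h
    · exact le_of_eq (rV_congr (α := α) (hNs n h).1.symm (hNs n h).2.symm)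
  have hmemA : ∀ η, f ∈ A η ↔ r (res f N) ≤ η := by
    intro η
    constructor
    · rintro ⟨n, hn⟩; exact le_trans (hrmin n) hn
    · intro h; exact ⟨N, h⟩
  constructor
  · -- f ∈ S → f ∈ DSet α A
    intro hfS
    have hGtrue : G (res f N) = true := hNg.2 hfS
    -- there is a mind change, so H (res f N) < α
    have hchange : ∃ m, G (res f (m + 1)) ≠ G (res f m) := by
      by_contra hno
      push_neg at hno
      have hall : ∀ n, G (res f n) = false := by
        intro n
        induction n with
        | zero => rw [res_zero]; exact hG
        | succ n ih => rw [hno n, ih]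
      rw [hall N] at hGtrue; exact Bool.false_ne_true hGtrue
    obtain ⟨m, hm⟩ := hchange
    have hHm : H (res f (m + 1)) < α := by
      have h1 : H (res f (m + 1)) < H (res f m) := hchg f m hm
      have h2 : H (res f m) < α + 1 := hlt _
      rw [Ordinal.add_one_eq_succ, Order.lt_succ_iff] at h2
      exact lt_of_lt_of_le h1 h2
    have hHinf : H (res f N) < α := by
      rcases le_total N (m + 1) with h | h
      · rw [← (hNs (m + 1) h).1]; exact hHm
      · exact lt_of_le_of_lt (hHanti f h) hHm
    -- parity condition at the stable point
    by_cases hpar : OrdEven (H (res f N)) ↔ (G (res f N) = true ↔ ¬ OrdEven α)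
    · have hrN : r (res f N) = H (res f N) := if_pos hpar
      refine ⟨H (res f N), hHinf, (hmemA _).2 (le_of_eq hrN), ?_, ?_⟩
      · intro η' hη' hmem
        exact absurd (hrN ▸ (hmemA η').1 hmem) (not_le.2 hη')
      · rw [hGtrue] at hpar; simpa using hpar
    · have hrN : r (res f N) = H (res f N) + 1 := if_neg hpar
      rw [hGtrue] at hpar
      simp only [true_iff, iff_true] at hpar
      -- hpar : ¬(OrdEven (H (res f N)) ↔ ¬OrdEven α)
      have hne : H (res f N) + 1 ≠ α := by
        intro he
        rw [← he, ordEven_succ] at hpar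
        exact hpar (by tauto)
      have hsucc : H (res f N) + 1 ≤ α := by
        rw [Ordinal.add_one_eq_succ]; exact Order.succ_le_of_lt hHinf
      have hlt3 : H (res f N) + 1 < α := lt_of_le_of_ne hsucc hne
      refine ⟨H (res f N) + 1, hlt3, (hmemA _).2 (le_of_eq hrN), ?_, ?_⟩
      · intro η' hη' hmem
        exact absurd (hrN ▸ (hmemA η').1 hmem) (not_le.2 hη')
      · rw [ordEven_succ]; tauto
  · -- f ∈ DSet α A → f ∈ S
    rintro ⟨η, hηα, hηmem, hηmin, hηpar⟩
    have hrle : r (res f N) ≤ η := (hmemA η).1 hηmem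
    have hηr : η = r (res f N) := by
      rcases lt_or_eq_of_le hrle with h | h
      · exact absurd ((hmemA _).2 (le_refl _)) (hηmin _ h)
      · exact h.symm
    by_contra hfS
    have hGfalse : G (res f N) = false := by
      cases hgn : G (res f N)
      · rfl
      · exact absurd (hNg.1 hgn) hfS
    subst hηr
    by_cases hpar : OrdEven (H (res f N)) ↔ (G (res f N) = true ↔ ¬ OrdEven α)
    · have hrN : r (res f N) = H (res f N) := if_pos hpar
      rw [hGfalse] at hpar
      simp only [Bool.false_eq_true, false_iff, not_not] at hpar
      rw [hrN] at hηpar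
      tauto
    · have hrN : r (res f N) = H (res f N) + 1 := if_neg hpar
      rw [hGfalse] at hpar
      simp only [Bool.false_eq_true, false_iff, not_not] at hpar
      rw [hrN, ordEven_succ] at hηpar
      tauto
end
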